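/- For H = ℤ, the relation ≤_M is a partial order on the affine version M_ℤ of L, and the poset (M_ℤ, ≤_M) is a lattice: any two elements have a meet and a join. -/

import Mathlib

set_option linter.unusedSectionVars false
set_option linter.unusedVariables false
set_option maxHeartbeats 2000000


/-- A point of the affine version of `L` over `H`: a maximal chain
`c : ⊥ = c₀ < c₁ < ⋯ < cₙ = ⊤` of `L` together with a nondecreasing tuple
`u = (u₁ ≤ ⋯ ≤ uₙ)` of elements of `H` (indexed here by `Fin n`, so `u ⟨k⟩ = u_{k+1}`). -/
structure AffinePt (L : Type) [Lattice L] [BoundedOrder L] (n : ℕ)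
    (H : Type) [Preorder H] : Type where
  c : Fin (n + 1) → L
  hc0 : c 0 = ⊥
  hcn : c (Fin.last n) = ⊤
  hcmono : StrictMono c
  u : Fin n → H
  humono : Monotone u

/-- The basic identification: `(c, u)` and `(c', u)` are identified whenever
`u_i = u_{i+1}` for every index `1 ≤ i ≤ n - 1` with `c_i ≠ c'_i`. -/
def basicRel {L : Type} [Lattice L] [BoundedOrder L] {n : ℕ} {H : Type} [Preorder H]
    (p q : AffinePt L n H) : Prop :=
  p.u = q.u ∧ ∀ (j : ℕ) (hj : j + 1 < n),
    p.c ⟨j + 1, by omega⟩ ≠ q.c ⟨j + 1, by omega⟩ →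
      p.u ⟨j, by omega⟩ = p.u ⟨j + 1, hj⟩

/-- The affine version `M_H` of `L` over `H`: the quotient of the set of pairs `(c, u)`
by the equivalence relation generated by `basicRel`. -/
abbrev AffineVersion (L : Type) [Lattice L] [BoundedOrder L] (n : ℕ)
    (H : Type) [Preorder H] : Type :=
  Quot (basicRel (L := L) (n := n) (H := H))

/-- The class `[c, u]` of a pair `(c, u)` in the affine version. -/
def mkA {L : Type} [Lattice L] [BoundedOrder L] {n : ℕ} {H : Type} [Preorder H]
    (p : AffinePt L n H) : AffineVersion L n H :=
  Quot.mk _ p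

/-- One step of the order: `α ≤ β` via representatives `[c, x]`, `[c, y]` with the same
chain `c` and `x ≤ y` coordinatewise. -/
def stepLe {L : Type} [Lattice L] [BoundedOrder L] {n : ℕ} {H : Type} [Preorder H]
    (α β : AffineVersion L n H) : Prop :=
  ∃ p q : AffinePt L n H, mkA p = α ∧ mkA q = β ∧ p.c = q.c ∧ ∀ k, p.u k ≤ q.u k

/-- The order `≤_M` on the affine version: the reflexive-transitive closure of `stepLe`,
i.e. existence of a finite sequence of one-chain comparisons. -/
def leM {L : Type} [Lattice L] [BoundedOrder L] {n : ℕ} {H : Type} [Preorder H]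
    (α β : AffineVersion L n H) : Prop :=
  Relation.ReflTransGen stepLe α β


section Dev
variable {L : Type} [Lattice L] [BoundedOrder L] {n : ℕ}

/-- number of coordinates of `u` that are `≤ t` -/
def mcount (p : AffinePt L n ℤ) (t : ℤ) : ℕ :=
  (Finset.univ.filter (fun k => p.u k ≤ t)).card

lemma mcount_le (p : AffinePt L n ℤ) (t : ℤ) : mcount p t ≤ n := by
  classical
  calc mcount p t ≤ Finset.univ.card := Finset.card_filter_le _ _
  _ = n := by simp

lemma lt_mcount_iff (p : AffinePt L n ℤ) (t : ℤ) (k : Fin n) :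
    (k : ℕ) < mcount p t ↔ p.u k ≤ t := by
  classical
  constructor
  · intro h
    by_contra hc
    -- filter ⊆ {j | j < k}
    have hsub : (Finset.univ.filter (fun j => p.u j ≤ t)) ⊆
        Finset.univ.filter (fun j : Fin n => (j : ℕ) < (k : ℕ)) := by
      intro j hj
      simp only [Finset.mem_filter, Finset.mem_univ, true_and] at hj ⊢
      by_contra hjk
      push_neg at hjk
      exact hc (le_trans (p.humono (by exact_mod_cast hjk)) hj)
    have hcard : mcount p t ≤ (Finset.univ.filter (fun j : Fin n => (j : ℕ) < (k : ℕ))).card :=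
      Finset.card_le_card hsub
    have : (Finset.univ.filter (fun j : Fin n => (j : ℕ) < (k : ℕ))).card ≤ (k : ℕ) := by
      have hinj : Set.InjOn (fun j : Fin n => (j : ℕ))
          (Finset.univ.filter (fun j : Fin n => (j : ℕ) < (k : ℕ))) := by
        intro a _ b _ hab; exact Fin.ext hab
      have := Finset.card_le_card_of_injOn (fun j : Fin n => (j : ℕ))
        (fun a ha => by
          simp only [Finset.mem_coe, Finset.mem_filter, Finset.mem_univ, true_and] at ha
          exact Finset.mem_range.2 ha) hinj
      simpa using this
    omega
  · intro h
    have hsub : (Finset.range ((k : ℕ) + 1)).card ≤ mcount p t := by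
      apply Finset.card_le_card_of_injOn (fun j : ℕ => if hj : j < n then (⟨j, hj⟩ : Fin n) else k)
      · intro a ha
        simp only [Finset.mem_coe, Finset.mem_range] at ha
        have han : a < n := lt_of_lt_of_le ha k.2
        simp only [Finset.mem_coe, Finset.mem_filter, Finset.mem_univ, true_and, dif_pos han]
        exact le_trans (p.humono (by simp [Fin.le_def]; omega)) h
      · intro a ha b hb hab
        simp only [Finset.mem_coe, Finset.mem_range] at ha hb
        have han : a < n := lt_of_lt_of_le (by omega) k.2
        have hbn : b < n := lt_of_lt_of_le (by omega) k.2
        simpa [dif_pos han, dif_pos hbn, Fin.ext_iff] using hab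
    simpa using hsub

/-- the profile of a point: the chain element at level `t` -/
def prof (p : AffinePt L n ℤ) (t : ℤ) : L :=
  p.c ⟨mcount p t, Nat.lt_succ_of_le (mcount_le p t)⟩

lemma mcount_mono (p : AffinePt L n ℤ) : Monotone (mcount p) := by
  intro s t hst
  classical
  apply Finset.card_le_card
  intro j hj
  simp only [Finset.mem_filter, Finset.mem_univ, true_and] at hj ⊢
  exact le_trans hj hst

lemma prof_mono (p : AffinePt L n ℤ) : Monotone (prof p) := by
  intro s t hst
  exact (p.hcmono.monotone (by simp [Fin.le_def]; exact mcount_mono p hst))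

lemma mcount_eq_of_iff (p : AffinePt L n ℤ) (t : ℤ) (m : ℕ) (hm : m ≤ n)
    (h : ∀ k : Fin n, (k : ℕ) < m ↔ p.u k ≤ t) : mcount p t = m := by
  by_contra hne
  rcases Nat.lt_or_ge (mcount p t) m with hlt | hge
  · have hk : (⟨mcount p t, lt_of_lt_of_le hlt hm⟩ : Fin n) ∈ (Finset.univ : Finset (Fin n)) :=
      Finset.mem_univ _
    have := (h ⟨mcount p t, lt_of_lt_of_le hlt hm⟩).1 hlt
    have := (lt_mcount_iff p t ⟨mcount p t, lt_of_lt_of_le hlt hm⟩).2 this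
    simp at this
  · have hlt : m < mcount p t := lt_of_le_of_ne hge (Ne.symm hne)
    have hmn : m < n := lt_of_lt_of_le hlt (mcount_le p t)
    have := (lt_mcount_iff p t ⟨m, hmn⟩).1 hlt
    have h2 := (h ⟨m, hmn⟩).2 this
    simp at h2
lemma mcount_congr (p q : AffinePt L n ℤ) (h : p.u = q.u) : mcount p = mcount q := by
  funext t; unfold mcount; rw [h]

lemma prof_eq_of_basicRel {p q : AffinePt L n ℤ} (h : basicRel p q) : prof p = prof q := by
  funext t
  have hm : mcount p t = mcount q t := by rw [mcount_congr p q h.1]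
  unfold prof
  rcases Nat.eq_zero_or_pos (mcount p t) with h0 | hpos
  · have e1 : (⟨mcount p t, Nat.lt_succ_of_le (mcount_le p t)⟩ : Fin (n+1)) = 0 := by
      simp [Fin.ext_iff, h0]
    have e2 : (⟨mcount q t, Nat.lt_succ_of_le (mcount_le q t)⟩ : Fin (n+1)) = 0 := by
      simp [Fin.ext_iff, ← hm, h0]
    rw [e1, e2, p.hc0, q.hc0]
  rcases Nat.lt_or_ge (mcount p t) n with hlt | hge
  · by_contra hne
    have hj : (mcount p t - 1) + 1 < n := by omega
    have hcne : p.c ⟨(mcount p t - 1) + 1, by omega⟩ ≠ q.c ⟨(mcount p t - 1) + 1, by omega⟩ := by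
      intro hc
      apply hne
      have e1 : (⟨mcount p t, Nat.lt_succ_of_le (mcount_le p t)⟩ : Fin (n+1))
          = ⟨(mcount p t - 1) + 1, by omega⟩ := by simp [Fin.ext_iff]; omega
      have e2 : (⟨mcount q t, Nat.lt_succ_of_le (mcount_le q t)⟩ : Fin (n+1))
          = ⟨(mcount p t - 1) + 1, by omega⟩ := by simp [Fin.ext_iff]; omega
      rw [e1, e2, hc]
    have hu := h.2 (mcount p t - 1) hj hcne
    -- u_{m-1} ≤ t < u_m , contradiction with equality
    have h1 : p.u ⟨mcount p t - 1, by omega⟩ ≤ t :=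
      (lt_mcount_iff p t ⟨mcount p t - 1, by omega⟩).1 (by simp; omega)
    have h2 : ¬ p.u ⟨(mcount p t - 1) + 1, hj⟩ ≤ t := by
      intro hle
      have := (lt_mcount_iff p t ⟨(mcount p t - 1) + 1, hj⟩).2 hle
      simp at this; omega
    rw [hu] at h1
    exact h2 h1
  · have hn : mcount p t = n := le_antisymm (mcount_le p t) hge
    have e1 : (⟨mcount p t, Nat.lt_succ_of_le (mcount_le p t)⟩ : Fin (n+1)) = Fin.last n := by
      simp [Fin.ext_iff, hn]
    have e2 : (⟨mcount q t, Nat.lt_succ_of_le (mcount_le q t)⟩ : Fin (n+1)) = Fin.last n := by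
      simp [Fin.ext_iff, ← hm, hn]
    rw [e1, e2, p.hcn, q.hcn]

/-- the profile, as a function on the quotient -/
def Prof : AffineVersion L n ℤ → (ℤ → L) :=
  Quot.lift prof (fun _ _ h => prof_eq_of_basicRel h)

@[simp] lemma Prof_mkA (p : AffinePt L n ℤ) : Prof (mkA p) = prof p := rfl

section Graded
variable (rk : L → ℕ) (hrk0 : rk ⊥ = 0) (hrkn : rk ⊤ = n)
  (hrkmono : StrictMono rk)
  (hrkcov : ∀ x y : L, x ⋖ y → rk y = rk x + 1)

lemma fin_strictmono_add (g : Fin (n+1) → ℕ) (hg : StrictMono g) :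
    ∀ (d : ℕ) (i j : Fin (n+1)), (j : ℕ) = (i : ℕ) + d → g i + d ≤ g j := by
  intro d
  induction d with
  | zero => intro i j hij; have he : i = j := Fin.ext (by omega); rw [he]; omega
  | succ d ih =>
    intro i j hij
    have hj' : (i : ℕ) + d < n + 1 := by omega
    have h1 := ih i ⟨(i : ℕ) + d, hj'⟩ (by simp)
    have h2 : g ⟨(i : ℕ) + d, hj'⟩ < g j := hg (by simp [Fin.lt_def]; omega)
    omega

set_option maxHeartbeats 2000000 in
include hrk0 hrkn hrkmono in
lemma rk_c (p : AffinePt L n ℤ) (k : Fin (n+1)) : rk (p.c k) = (k : ℕ) := by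
  have hg : StrictMono (fun k => rk (p.c k)) := hrkmono.comp p.hcmono
  have h1 := fin_strictmono_add (fun k => rk (p.c k)) hg (k : ℕ) 0 k (by simp)
  have h2 := fin_strictmono_add (fun k => rk (p.c k)) hg (n - (k : ℕ)) k (Fin.last n)
    (by simp [Fin.last]; omega)
  simp only [p.hc0, p.hcn, hrk0, hrkn] at h1 h2
  omega

set_option maxHeartbeats 2000000 in
include hrk0 hrkn hrkmono in
lemma rk_prof (p : AffinePt L n ℤ) (t : ℤ) : rk (prof p t) = mcount p t :=
  rk_c rk hrk0 hrkn hrkmono p _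


set_option maxHeartbeats 2000000 in
include hrk0 hrkn hrkmono in
lemma basicRel_of_prof_eq {p q : AffinePt L n ℤ} (h : prof p = prof q) : basicRel p q := by
  have hm : ∀ t, mcount p t = mcount q t := by
    intro t
    have hpq := congrFun h t
    have e1 := rk_prof rk hrk0 hrkn hrkmono p t
    have e2 := rk_prof rk hrk0 hrkn hrkmono q t
    rw [← e1, ← e2, hpq]
  have hu : p.u = q.u := by
    funext k
    have h1 : p.u k ≤ q.u k := by
      rw [← lt_mcount_iff p (q.u k) k, hm]
      rw [lt_mcount_iff q (q.u k) k]
    have h2 : q.u k ≤ p.u k := by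
      rw [← lt_mcount_iff q (p.u k) k, ← hm]
      rw [lt_mcount_iff p (p.u k) k]
    exact le_antisymm h1 h2
  refine ⟨hu, fun j hj hne => ?_⟩
  by_contra hune
  have hlt : p.u ⟨j, by omega⟩ < p.u ⟨j+1, hj⟩ :=
    lt_of_le_of_ne (p.humono (by simp [Fin.le_def])) hune
  set t := p.u ⟨j, by omega⟩ with ht
  have hmc : mcount p t = j + 1 := by
    apply mcount_eq_of_iff p t (j+1) (by omega)
    intro k
    constructor
    · intro hk
      exact le_trans (p.humono (show k ≤ ⟨j, by omega⟩ by simp [Fin.le_def]; omega)) le_rfl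
    · intro hk
      by_contra hc
      push_neg at hc
      have h3 : p.u ⟨j+1, hj⟩ ≤ p.u k := p.humono (by simp [Fin.le_def]; omega)
      have h4 : p.u ⟨j+1, hj⟩ ≤ t := le_trans h3 hk
      omega
  have hmq : mcount q t = j + 1 := by rw [← hm t]; exact hmc
  have hprof := congrFun h t
  unfold prof at hprof
  apply hne
  have e1 : (⟨mcount p t, Nat.lt_succ_of_le (mcount_le p t)⟩ : Fin (n+1))
      = ⟨j + 1, by omega⟩ := Fin.ext (by simpa using hmc)
  have e2 : (⟨mcount q t, Nat.lt_succ_of_le (mcount_le q t)⟩ : Fin (n+1))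
      = ⟨j + 1, by omega⟩ := Fin.ext (by simpa using hmq)
  rw [e1] at hprof; rw [e2] at hprof; exact hprof

include hrk0 hrkn hrkmono in
lemma mkA_eq_iff {p q : AffinePt L n ℤ} : mkA p = mkA q ↔ prof p = prof q := by
  constructor
  · intro h
    have := congrArg Prof h
    simpa using this
  · intro h
    exact Quot.sound (basicRel_of_prof_eq rk hrk0 hrkn hrkmono h)

end Graded

lemma prof_anti_of_stepLe {α β : AffineVersion L n ℤ} (h : stepLe α β) :
    ∀ t, Prof β t ≤ Prof α t := by
  obtain ⟨p, q, hp, hq, hc, hu⟩ := h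
  subst hp; subst hq
  intro t
  show prof q t ≤ prof p t
  have hm : mcount q t ≤ mcount p t := by
    apply Finset.card_le_card
    intro k hk
    simp only [Finset.mem_filter, Finset.mem_univ, true_and] at hk ⊢
    exact le_trans (hu k) hk
  unfold prof
  rw [hc]
  exact q.hcmono.monotone (by simp [Fin.le_def]; exact hm)

lemma prof_anti_of_leM {α β : AffineVersion L n ℤ} (h : leM α β) :
    ∀ t, Prof β t ≤ Prof α t := by
  induction h with
  | refl => intro t; exact le_rfl
  | tail _ hstep ih => intro t; exact le_trans (prof_anti_of_stepLe hstep t) (ih t)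

lemma exists_tails (p : AffinePt L n ℤ) :
    ∃ A B : ℤ, A ≤ B ∧ (∀ t, t < A → prof p t = ⊥) ∧ (∀ t, B < t → prof p t = ⊤) := by
  rcases Nat.eq_zero_or_pos n with hn | hn
  · subst hn
    refine ⟨0, 0, le_rfl, fun t _ => ?_, fun t _ => ?_⟩
    · show p.c _ = ⊥
      have e : (⟨mcount p t, Nat.lt_succ_of_le (mcount_le p t)⟩ : Fin 1) = 0 :=
        Fin.ext (by have := mcount_le p t; simpa using this)
      rw [e, p.hc0]
    · show p.c _ = ⊤
      have e : (⟨mcount p t, Nat.lt_succ_of_le (mcount_le p t)⟩ : Fin 1) = Fin.last 0 :=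
        Fin.ext (by have := mcount_le p t; simpa using this)
      rw [e, p.hcn]
  · refine ⟨p.u ⟨0, hn⟩, p.u ⟨n-1, by omega⟩,
      p.humono (by simp [Fin.le_def]), fun t ht => ?_, fun t ht => ?_⟩
    · have hm : mcount p t = 0 := by
        apply mcount_eq_of_iff p t 0 (by omega)
        intro k
        simp only [Nat.not_lt_zero, false_iff]
        intro hc
        have : p.u ⟨0, hn⟩ ≤ p.u k := p.humono (by simp [Fin.le_def])
        omega
      show p.c _ = ⊥
      have e : (⟨mcount p t, Nat.lt_succ_of_le (mcount_le p t)⟩ : Fin (n+1)) = 0 :=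
        Fin.ext (by simpa using hm)
      rw [e, p.hc0]
    · have hm : mcount p t = n := by
        apply mcount_eq_of_iff p t n (le_rfl)
        intro k
        simp only [k.2, true_iff]
        have : p.u k ≤ p.u ⟨n-1, by omega⟩ := p.humono (by simp [Fin.le_def]; omega)
        omega
      show p.c _ = ⊤
      have e : (⟨mcount p t, Nat.lt_succ_of_le (mcount_le p t)⟩ : Fin (n+1)) = Fin.last n :=
        Fin.ext (by simpa using hm)
      rw [e, p.hcn]

section Graded2
variable (rk : L → ℕ) (hrk0 : rk ⊥ = 0) (hrkn : rk ⊤ = n)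
  (hrkmono : StrictMono rk)
  (hrkcov : ∀ x y : L, x ⋖ y → rk y = rk x + 1)

include hrkmono in
lemma rk_le_inj {x y : L} (hxy : x ≤ y) (hrk : rk y ≤ rk x) : x = y := by
  rcases lt_or_eq_of_le hxy with h | h
  · exact absurd (hrkmono h) (by omega)
  · exact h

include hrkn hrkmono in
lemma rk_le_n (x : L) : rk x ≤ n := by
  rw [← hrkn]; exact hrkmono.monotone le_top

include hrkn hrkmono in
lemma eq_top_of_rk {x : L} (h : n ≤ rk x) : x = ⊤ :=
  rk_le_inj rk hrkmono le_top (by rw [hrkn]; exact h)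

include hrk0 hrkmono in
lemma eq_bot_of_rk {x : L} (h : rk x ≤ 0) : x = ⊥ :=
  (rk_le_inj rk hrkmono bot_le (by rw [hrk0]; omega)).symm

include hrkmono hrkcov in
lemma exists_cocover {x y : L} (h : y < x) :
    ∃ w, y ≤ w ∧ w < x ∧ rk w + 1 = rk x := by
  have key : ∀ d : ℕ, ∀ y : L, y < x → rk x - rk y ≤ d → ∃ w, y ≤ w ∧ w ⋖ x := by
    intro d
    induction d with
    | zero => intro y hy hd; have := hrkmono hy; omega
    | succ d ih =>
      intro y hy hd
      by_cases hc : y ⋖ x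
      · exact ⟨y, le_rfl, hc⟩
      · obtain ⟨z, hz1, hz2⟩ := (not_covBy_iff hy).1 hc
        obtain ⟨w, hw1, hw2⟩ := ih z hz2 (by have := hrkmono hz1; omega)
        exact ⟨w, le_trans hz1.le hw1, hw2⟩
  obtain ⟨w, hw1, hw2⟩ := key (rk x - rk y) y h le_rfl
  exact ⟨w, hw1, hw2.lt, (hrkcov w x hw2).symm⟩


include hrk0 hrkn hrkmono hrkcov in
lemma exists_chain (f : ℤ → L) (hf : Monotone f) (A B : ℤ)
    (hA : ∀ t, t < A → f t = ⊥) (hB : ∀ t, B < t → f t = ⊤) :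
    ∃ c : Fin (n+1) → L, (∀ k : Fin (n+1), rk (c k) = (k : ℕ)) ∧ StrictMono c ∧
      c 0 = ⊥ ∧ c (Fin.last n) = ⊤ ∧
      ∀ t, ∀ k : Fin (n+1), (k : ℕ) = rk (f t) → c k = f t := by
  have hrkf : Monotone (fun t => rk (f t)) := hrkmono.monotone.comp hf
  have key : ∀ j : ℕ, ∃ g : ℕ → L,
      (∀ k, n - j ≤ k → k ≤ n → rk (g k) = k) ∧
      (∀ k, n - j ≤ k → k < n → g k < g (k+1)) ∧
      (∀ t, n - j ≤ rk (f t) → g (rk (f t)) = f t) ∧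
      (∀ t, rk (f t) ≤ n - j → f t ≤ g (n - j)) := by
    intro j
    induction j with
    | zero =>
      refine ⟨fun _ => ⊤, ?_, ?_, ?_, ?_⟩
      · intro k h1 h2
        have : k = n := by omega
        rw [this, hrkn]
      · intro k h1 h2; omega
      · intro t h1
        have h2 : rk (f t) = n := le_antisymm (rk_le_n rk hrkn hrkmono (f t)) (by omega)
        rw [h2]
        exact (eq_top_of_rk rk hrkn hrkmono (by omega)).symm
      · intro t _; exact le_top
    | succ j ih =>
      obtain ⟨g, hg1, hg2, hg3, hg4⟩ := ih
      by_cases hjn : n ≤ j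
      · have e : n - (j+1) = n - j := by omega
        exact ⟨g, by rw [e]; exact hg1, by rw [e]; exact hg2, by rw [e]; exact hg3,
          by rw [e]; exact hg4⟩
      · push_neg at hjn
        set k₀ := n - j with hk₀
        have hk₀1 : 1 ≤ k₀ := by omega
        have hk₀n : k₀ ≤ n := by omega
        have hnj1 : n - (j+1) = k₀ - 1 := by omega
        -- greatest t with rk (f t) ≤ k₀ - 1
        obtain ⟨t', ht'1, ht'2⟩ := Int.exists_greatest_of_bdd
          (P := fun t => rk (f t) ≤ k₀ - 1)
          ⟨B, fun z hz => by
            have hz' : rk (f z) ≤ k₀ - 1 := hz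
            by_contra hzB
            push_neg at hzB
            rw [hB z hzB, hrkn] at hz'
            omega⟩
          ⟨A - 1, show rk (f (A-1)) ≤ k₀ - 1 by rw [hA (A-1) (by omega), hrk0]; omega⟩
        have ht'2' : ∀ t, rk (f t) ≤ k₀ - 1 → t ≤ t' := ht'2
        have hy_le : ∀ t, rk (f t) ≤ k₀ - 1 → f t ≤ f t' := fun t h => hf (ht'2' t h)
        have hy_rk : rk (f t') ≤ k₀ - 1 := ht'1
        have hrkg : rk (g k₀) = k₀ := hg1 k₀ le_rfl hk₀n
        have hy_le_g : f t' ≤ g k₀ := hg4 t' (by omega)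
        have hy_lt_g : f t' < g k₀ := lt_of_le_of_ne hy_le_g (by
          intro he; rw [he, hrkg] at hy_rk; omega)
        -- choose the new element w of rank k₀ - 1
        have hw : ∃ w, f t' ≤ w ∧ w < g k₀ ∧ rk w = k₀ - 1 := by
          by_cases hcase : rk (f t') = k₀ - 1
          · exact ⟨f t', le_rfl, hy_lt_g, hcase⟩
          · obtain ⟨w, hw1, hw2, hw3⟩ := exists_cocover rk hrkmono hrkcov hy_lt_g
            exact ⟨w, hw1, hw2, by omega⟩
        obtain ⟨w, hwy, hwlt, hwrk⟩ := hw
        refine ⟨Function.update g (k₀ - 1) w, ?_, ?_, ?_, ?_⟩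
        · intro k h1 h2
          rcases eq_or_ne k (k₀ - 1) with hk | hk
          · rw [hk, Function.update_self]; omega
          · rw [Function.update_of_ne hk]
            exact hg1 k (by omega) h2
        · intro k h1 h2
          rcases eq_or_ne k (k₀ - 1) with hk | hk
          · subst hk
            rw [Function.update_self, Function.update_of_ne (by omega)]
            have : k₀ - 1 + 1 = k₀ := by omega
            rw [this]
            exact hwlt
          · rw [Function.update_of_ne hk, Function.update_of_ne (by omega)]
            exact hg2 k (by omega) h2
        · intro t h1
          rcases eq_or_ne (rk (f t)) (k₀ - 1) with hk | hk
          · rw [hk, Function.update_self]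
            have hle : f t ≤ w := le_trans (hy_le t (by omega)) hwy
            exact (rk_le_inj rk hrkmono hle (by omega)).symm
          · rw [Function.update_of_ne hk]
            exact hg3 t (by omega)
        · intro t h1
          rw [hnj1, Function.update_self]
          exact le_trans (hy_le t (by omega)) hwy
  obtain ⟨g, hg1, hg2, hg3, hg4⟩ := key n
  simp only [Nat.sub_self] at hg1 hg2 hg3 hg4
  refine ⟨fun k => g k, ?_, ?_, ?_, ?_, ?_⟩
  · intro k
    exact hg1 k (Nat.zero_le _) (by omega)
  · rw [Fin.strictMono_iff_lt_succ]
    intro i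
    have := hg2 i (Nat.zero_le _) i.2
    simpa [Fin.castSucc, Fin.succ] using this
  · show g ((0 : Fin (n+1)) : ℕ) = ⊥
    apply eq_bot_of_rk rk hrk0 hrkmono
    rw [show ((0 : Fin (n+1)) : ℕ) = 0 from rfl, hg1 0 (Nat.zero_le _) (by omega)]
  · show g ((Fin.last n : Fin (n+1)) : ℕ) = ⊤
    apply eq_top_of_rk rk hrkn hrkmono
    rw [show ((Fin.last n : Fin (n+1)) : ℕ) = n from rfl, hg1 n (Nat.zero_le _) le_rfl]
  · intro t k hk
    show g (k : ℕ) = f t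
    rw [hk]
    exact hg3 t (Nat.zero_le _)


include hrk0 hrkn hrkmono in
lemma exists_point (f : ℤ → L) (hf : Monotone f) (A B : ℤ)
    (hA : ∀ t, t < A → f t = ⊥) (hB : ∀ t, B < t → f t = ⊤)
    (c : Fin (n+1) → L) (hrkc : ∀ k : Fin (n+1), rk (c k) = (k : ℕ))
    (hcm : StrictMono c) (hc0 : c 0 = ⊥) (hcn : c (Fin.last n) = ⊤)
    (hcf : ∀ t, ∀ k : Fin (n+1), (k : ℕ) = rk (f t) → c k = f t) :
    ∃ p : AffinePt L n ℤ, p.c = c ∧ prof p = f ∧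
      ∀ k : Fin n, ∀ t, (p.u k ≤ t ↔ (k : ℕ) + 1 ≤ rk (f t)) := by
  have hrkf : Monotone (fun t => rk (f t)) := hrkmono.monotone.comp hf
  have hch : ∀ k : Fin n, ∃ a : ℤ, ((k : ℕ) + 1 ≤ rk (f a)) ∧
      ∀ z : ℤ, ((k : ℕ) + 1 ≤ rk (f z)) → a ≤ z := by
    intro k
    apply Int.exists_least_of_bdd (P := fun t => (k : ℕ) + 1 ≤ rk (f t))
    · refine ⟨A, fun z hz => ?_⟩
      have hz' : (k : ℕ) + 1 ≤ rk (f z) := hz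
      by_contra hzA
      push_neg at hzA
      rw [hA z hzA, hrk0] at hz'
      omega
    · refine ⟨B + 1, show (k : ℕ) + 1 ≤ rk (f (B+1)) from ?_⟩
      rw [hB (B+1) (by omega), hrkn]
      have := k.2
      omega
  choose u hu1 hu2 using hch
  have hiff : ∀ k : Fin n, ∀ t, (u k ≤ t ↔ (k : ℕ) + 1 ≤ rk (f t)) := by
    intro k t
    constructor
    · intro h
      exact le_trans (hu1 k) (hrkf h)
    · intro h
      exact hu2 k t h
  have humono : Monotone u := by
    intro j k hjk
    apply hu2 j (u k)
    have := hu1 k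
    have hjk' : (j : ℕ) + 1 ≤ (k : ℕ) + 1 := by
      have : (j : ℕ) ≤ (k : ℕ) := hjk
      omega
    omega
  refine ⟨⟨c, hc0, hcn, hcm, u, humono⟩, rfl, ?_, hiff⟩
  funext t
  have hm : mcount ⟨c, hc0, hcn, hcm, u, humono⟩ t = rk (f t) := by
    apply mcount_eq_of_iff _ t (rk (f t)) (rk_le_n rk hrkn hrkmono (f t))
    intro k
    show ((k : ℕ) < rk (f t) ↔ u k ≤ t)
    rw [hiff k t]
    omega
  show (⟨c, hc0, hcn, hcm, u, humono⟩ : AffinePt L n ℤ).c _ = f t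
  apply hcf
  simpa using hm


include hrk0 hrkn hrkmono hrkcov in
lemma exists_shared_chain (f : ℤ → L) (hf : Monotone f) (A B : ℤ)
    (hA : ∀ t, t < A → f t = ⊥) (hB : ∀ t, B < t → f t = ⊤) (z : L)
    (hcomp : ∀ t, f t ≤ z ∨ z ≤ f t) :
    ∃ c : Fin (n+1) → L, (∀ k : Fin (n+1), rk (c k) = (k : ℕ)) ∧ StrictMono c ∧
      c 0 = ⊥ ∧ c (Fin.last n) = ⊤ ∧
      (∀ t, ∀ k : Fin (n+1), (k : ℕ) = rk (f t) → c k = f t) ∧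
      (∀ k : Fin (n+1), (k : ℕ) = rk z → c k = z) := by
  by_cases hza : ∀ t, f t ≤ z
  · have hz : z = ⊤ := le_antisymm le_top (by rw [← hB (B+1) (by omega)]; exact hza (B+1))
    obtain ⟨c, h1, h2, h3, h4, h5⟩ := exists_chain rk hrk0 hrkn hrkmono hrkcov f hf A B hA hB
    refine ⟨c, h1, h2, h3, h4, h5, ?_⟩
    intro k hk
    rw [hz] at hk ⊢
    rw [hrkn] at hk
    have : k = Fin.last n := Fin.ext (by simpa [Fin.last] using hk)
    rw [this, h4]
  · push_neg at hza
    obtain ⟨t₂, ht₂1, ht₂2⟩ := Int.exists_least_of_bdd (P := fun t => ¬ f t ≤ z)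
      ⟨A, fun t ht => by
        by_contra htA
        push_neg at htA
        exact ht (by rw [hA t htA]; exact bot_le)⟩
      hza
    have hz1 : z ≤ f t₂ := by
      rcases hcomp t₂ with h | h
      · exact absurd h ht₂1
      · exact h
    have hz2 : ∀ t, t < t₂ → f t ≤ z := by
      intro t ht
      by_contra hc
      have := ht₂2 t hc
      omega
    set h : ℤ → L := fun t => if t < t₂ then f t else if t = t₂ then z else f (t-1) with hh
    have hht₂ : h t₂ = z := by simp [hh]
    have hhlt : ∀ t, t < t₂ → h t = f t := by intro t ht; simp [hh, ht]
    have hhgt : ∀ t, t₂ < t → h t = f (t-1) := by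
      intro t ht
      simp only [hh]
      rw [if_neg (by omega), if_neg (by omega)]
    have hhmono : Monotone h := by
      apply monotone_int_of_le_succ
      intro t
      rcases lt_trichotomy (t+1) t₂ with h1 | h1 | h1
      · rw [hhlt t (by omega), hhlt (t+1) h1]
        exact hf (by omega)
      · rw [hhlt t (by omega), h1, hht₂]
        exact hz2 t (by omega)
      · rcases lt_trichotomy t t₂ with h2 | h2 | h2
        · have : t + 1 = t₂ ∨ t₂ < t + 1 := by omega
          rw [hhlt t h2, hhgt (t+1) h1]
          have : t + 1 - 1 = t := by ring
          rw [this]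
        · subst h2
          rw [hht₂, hhgt (t+1) (by omega)]
          have e : t + 1 - 1 = t := by ring
          rw [e]
          exact hz1
        · rw [hhgt t h2, hhgt (t+1) h1]
          exact hf (by omega)
    have hAt₂ : A ≤ t₂ := by
      by_contra hc
      push_neg at hc
      exact ht₂1 (by rw [hA t₂ hc]; exact bot_le)
    have hhA : ∀ t, t < A → h t = ⊥ := by
      intro t ht
      rw [hhlt t (by omega)]
      exact hA t ht
    have hhB : ∀ t, max (B+1) (t₂+1) < t → h t = ⊤ := by
      intro t ht
      rw [hhgt t (by omega)]
      exact hB (t-1) (by omega)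
    obtain ⟨c, h1, h2, h3, h4, h5⟩ := exists_chain rk hrk0 hrkn hrkmono hrkcov h hhmono
      A (max (B+1) (t₂+1)) hhA hhB
    refine ⟨c, h1, h2, h3, h4, ?_, ?_⟩
    · intro t k hk
      rcases lt_or_ge t t₂ with ht | ht
      · have := hhlt t ht
        rw [← this] at hk ⊢
        exact h5 t k hk
      · have he : h (t+1) = f t := by
          rw [hhgt (t+1) (by omega)]
          have : t + 1 - 1 = t := by ring
          rw [this]
        rw [← he] at hk ⊢
        exact h5 (t+1) k hk
    · intro k hk
      rw [← hht₂] at hk ⊢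
      exact h5 t₂ k hk


include hrk0 hrkn hrkmono hrkcov in
lemma path_lemma : ∀ (N : ℕ) (f g : ℤ → L), Monotone f → Monotone g →
    (∀ t, g t ≤ f t) → ∀ (A B : ℤ),
    (∀ t, t < A → f t = ⊥ ∧ g t = ⊥) → (∀ t, B < t → f t = ⊤ ∧ g t = ⊤) →
    ((Finset.Icc A B).sum (fun t => rk (f t) - rk (g t)) ≤ N) →
    ∀ p q : AffinePt L n ℤ, prof p = f → prof q = g → leM (mkA p) (mkA q) := by
  intro N
  induction N with
  | zero =>
    intro f g hf hg hle A B hA hB hN p q hp hq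
    have hfg : f = g := by
      funext t
      rcases lt_or_ge t A with h | h
      · rw [(hA t h).1, (hA t h).2]
      rcases lt_or_ge B t with h' | h'
      · rw [(hB t h').1, (hB t h').2]
      have ht : t ∈ Finset.Icc A B := Finset.mem_Icc.2 ⟨h, h'⟩
      have hsum : (Finset.Icc A B).sum (fun t => rk (f t) - rk (g t)) = 0 := by omega
      have hterm := (Finset.sum_eq_zero_iff.1 hsum) t ht
      have hrkle : rk (g t) ≤ rk (f t) := hrkmono.monotone (hle t)
      exact (rk_le_inj rk hrkmono (hle t) (by omega)).symm
    have : mkA p = mkA q := by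
      rw [mkA_eq_iff rk hrk0 hrkn hrkmono, hp, hq, hfg]
    rw [this]
    exact Relation.ReflTransGen.refl
  | succ N ih =>
    intro f g hf hg hle A B hA hB hN p q hp hq
    by_cases hfg : f = g
    · have : mkA p = mkA q := by
        rw [mkA_eq_iff rk hrk0 hrkn hrkmono, hp, hq, hfg]
      rw [this]
      exact Relation.ReflTransGen.refl
    -- least t with f t ≠ g t
    obtain ⟨t₁, ht₁, ht₁min⟩ := Int.exists_least_of_bdd (P := fun t => f t ≠ g t)
      ⟨A, fun t ht => by
        by_contra htA
        push_neg at htA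
        exact ht (by rw [(hA t htA).1, (hA t htA).2])⟩
      (by
        by_contra hc
        push_neg at hc
        exact hfg (funext hc))
    have hflt : ∀ t, t < t₁ → f t = g t := by
      intro t ht
      by_contra hc
      have := ht₁min t hc
      omega
    have hAt₁ : A ≤ t₁ := by
      by_contra hc
      push_neg at hc
      exact ht₁ (by rw [(hA t₁ hc).1, (hA t₁ hc).2])
    have ht₁B : t₁ ≤ B := by
      by_contra hc
      push_neg at hc
      exact ht₁ (by rw [(hB t₁ hc).1, (hB t₁ hc).2])
    -- greatest t with f t = f t₁ ∧ g t ≠ f t₁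
    obtain ⟨b, hb, hbmax⟩ := Int.exists_greatest_of_bdd
      (P := fun t => f t = f t₁ ∧ g t ≠ f t₁)
      ⟨B, fun t ht => by
        by_contra htB
        push_neg at htB
        have h1 := (hB t htB).1
        have h2 := (hB t htB).2
        exact ht.2 (by rw [h2, ← h1, ht.1])⟩
      ⟨t₁, rfl, fun hc => ht₁ hc.symm⟩
    obtain ⟨hbf, hbg⟩ := hb
    have ht₁b : t₁ ≤ b := hbmax t₁ ⟨rfl, fun hc => ht₁ hc.symm⟩
    have hbB : b ≤ B := by
      by_contra hc
      push_neg at hc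
      exact hbg (by rw [(hB b hc).2, ← (hB b hc).1, hbf])
    set z := g b with hz
    have hzlt : z < f t₁ := lt_of_le_of_ne (hbf ▸ hle b) hbg
    have hfwin : ∀ t, t₁ ≤ t → t ≤ b → f t = f t₁ :=
      fun t h1 h2 => le_antisymm (by rw [← hbf]; exact hf h2) (hf h1)
    have hgz : ∀ t, t ≤ b → g t ≤ z := fun t ht => hg ht
    set F : ℤ → L := fun t => if t₁ ≤ t ∧ t ≤ b then z else f t with hF
    have hFin : ∀ t, t₁ ≤ t → t ≤ b → F t = z := by
      intro t h1 h2; simp only [hF]; rw [if_pos ⟨h1, h2⟩]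
    have hFout : ∀ t, ¬ (t₁ ≤ t ∧ t ≤ b) → F t = f t := by
      intro t ht; simp only [hF]; rw [if_neg ht]
    have hFle : ∀ t, F t ≤ f t := by
      intro t
      by_cases ht : t₁ ≤ t ∧ t ≤ b
      · rw [hFin t ht.1 ht.2, hfwin t ht.1 ht.2]
        exact hzlt.le
      · rw [hFout t ht]
    have hgF : ∀ t, g t ≤ F t := by
      intro t
      by_cases ht : t₁ ≤ t ∧ t ≤ b
      · rw [hFin t ht.1 ht.2]
        exact hgz t ht.2
      · rw [hFout t ht]
        exact hle t
    have hFmono : Monotone F := by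
      apply monotone_int_of_le_succ
      intro t
      by_cases h1 : t₁ ≤ t ∧ t ≤ b
      · by_cases h2 : t₁ ≤ t + 1 ∧ t + 1 ≤ b
        · rw [hFin t h1.1 h1.2, hFin (t+1) h2.1 h2.2]
        · rw [hFin t h1.1 h1.2, hFout (t+1) h2]
          calc z ≤ f t₁ := hzlt.le
          _ ≤ f (t+1) := hf (by omega)
      · by_cases h2 : t₁ ≤ t + 1 ∧ t + 1 ≤ b
        · rw [hFout t h1, hFin (t+1) h2.1 h2.2]
          have ht : t < t₁ := by omega
          rw [hflt t ht]
          exact hgz t (by omega)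
        · rw [hFout t h1, hFout (t+1) h2]
          exact hf (by omega)
    have hcomp : ∀ t, f t ≤ z ∨ z ≤ f t := by
      intro t
      rcases lt_or_ge t t₁ with h | h
      · left; rw [hflt t h]; exact hgz t (by omega)
      rcases le_or_gt t b with h' | h'
      · right; rw [hfwin t h h']; exact hzlt.le
      · right
        calc z ≤ f t₁ := hzlt.le
        _ ≤ f t := hf h
    -- shared chain
    obtain ⟨c, hc1, hc2, hc3, hc4, hc5, hc6⟩ :=
      exists_shared_chain rk hrk0 hrkn hrkmono hrkcov f hf A B
        (fun t ht => (hA t ht).1) (fun t ht => (hB t ht).1) z hcomp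
    have hcF : ∀ t, ∀ k : Fin (n+1), (k : ℕ) = rk (F t) → c k = F t := by
      intro t k hk
      by_cases ht : t₁ ≤ t ∧ t ≤ b
      · rw [hFin t ht.1 ht.2] at hk ⊢
        exact hc6 k hk
      · rw [hFout t ht] at hk ⊢
        exact hc5 t k hk
    -- tails for F
    have hFA : ∀ t, t < A → F t = ⊥ ∧ g t = ⊥ := by
      intro t ht
      rw [hFout t (by omega)]
      exact hA t ht
    have hFB : ∀ t, B < t → F t = ⊤ ∧ g t = ⊤ := by
      intro t ht
      rw [hFout t (by omega)]
      exact hB t ht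
    -- measure decrease
    have hmeas : (Finset.Icc A B).sum (fun t => rk (F t) - rk (g t)) ≤ N := by
      have hlt : (Finset.Icc A B).sum (fun t => rk (F t) - rk (g t)) <
          (Finset.Icc A B).sum (fun t => rk (f t) - rk (g t)) := by
        apply Finset.sum_lt_sum
        · intro i _
          exact Nat.sub_le_sub_right (hrkmono.monotone (hFle i)) _
        · refine ⟨t₁, Finset.mem_Icc.2 ⟨hAt₁, ht₁B⟩, ?_⟩
          have h1 : rk (F t₁) < rk (f t₁) := by
            rw [hFin t₁ le_rfl ht₁b]
            exact hrkmono hzlt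
          have h2 : rk (g t₁) ≤ rk (F t₁) := hrkmono.monotone (hgF t₁)
          omega
      omega
    -- the two points on the shared chain
    obtain ⟨p₁, hp₁c, hp₁prof, hp₁u⟩ := exists_point rk hrk0 hrkn hrkmono f hf A B
      (fun t ht => (hA t ht).1) (fun t ht => (hB t ht).1) c hc1 hc2 hc3 hc4 hc5
    obtain ⟨p₂, hp₂c, hp₂prof, hp₂u⟩ := exists_point rk hrk0 hrkn hrkmono F hFmono A B
      (fun t ht => (hFA t ht).1) (fun t ht => (hFB t ht).1) c hc1 hc2 hc3 hc4 hcF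
    have hstep : stepLe (mkA p₁) (mkA p₂) := by
      refine ⟨p₁, p₂, rfl, rfl, by rw [hp₁c, hp₂c], ?_⟩
      intro k
      rw [hp₁u k (p₂.u k)]
      have h1 : (k : ℕ) + 1 ≤ rk (F (p₂.u k)) := (hp₂u k (p₂.u k)).1 le_rfl
      exact le_trans h1 (hrkmono.monotone (hFle (p₂.u k)))
    have hpp₁ : mkA p = mkA p₁ := by
      rw [mkA_eq_iff rk hrk0 hrkn hrkmono, hp, hp₁prof]
    have hrest : leM (mkA p₂) (mkA q) :=
      ih F g hFmono hg hgF A B hFA hFB hmeas p₂ q hp₂prof hq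
    rw [hpp₁]
    exact Relation.ReflTransGen.head hstep hrest


include hrk0 hrkn hrkmono hrkcov in
lemma leM_of_prof_le {p q : AffinePt L n ℤ} (h : ∀ t, prof q t ≤ prof p t) :
    leM (mkA p) (mkA q) := by
  obtain ⟨A₁, B₁, _, hA₁, hB₁⟩ := exists_tails p
  obtain ⟨A₂, B₂, _, hA₂, hB₂⟩ := exists_tails q
  apply path_lemma rk hrk0 hrkn hrkmono hrkcov
    ((Finset.Icc (min A₁ A₂) (max B₁ B₂)).sum (fun t => rk (prof p t) - rk (prof q t)))
    (prof p) (prof q) (prof_mono p) (prof_mono q) h (min A₁ A₂) (max B₁ B₂)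
    ?_ ?_ le_rfl p q rfl rfl
  · intro t ht
    exact ⟨hA₁ t (lt_of_lt_of_le ht (min_le_left _ _)),
      hA₂ t (lt_of_lt_of_le ht (min_le_right _ _))⟩
  · intro t ht
    exact ⟨hB₁ t (lt_of_le_of_lt (le_max_left _ _) ht),
      hB₂ t (lt_of_le_of_lt (le_max_right _ _) ht)⟩

include hrk0 hrkn hrkmono hrkcov in
lemma exists_point_of_profile (f : ℤ → L) (hf : Monotone f) (A B : ℤ)
    (hA : ∀ t, t < A → f t = ⊥) (hB : ∀ t, B < t → f t = ⊤) :
    ∃ p : AffinePt L n ℤ, prof p = f := by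
  obtain ⟨c, h1, h2, h3, h4, h5⟩ := exists_chain rk hrk0 hrkn hrkmono hrkcov f hf A B hA hB
  obtain ⟨p, _, hp, _⟩ := exists_point rk hrk0 hrkn hrkmono f hf A B hA hB c h1 h2 h3 h4 h5
  exact ⟨p, hp⟩

end Graded2
end Dev

theorem stmt8 (L : Type) [Lattice L] [BoundedOrder L] (n : ℕ)
    (rk : L → ℕ) (hrk0 : rk ⊥ = 0) (hrkn : rk ⊤ = n)
    (hrkmono : StrictMono rk)
    (hrkcov : ∀ x y : L, x ⋖ y → rk y = rk x + 1) :
    (∀ α : AffineVersion L n ℤ, leM α α) ∧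
    (∀ α β : AffineVersion L n ℤ, leM α β → leM β α → α = β) ∧
    (∀ α β γ : AffineVersion L n ℤ, leM α β → leM β γ → leM α γ) ∧
    (∀ α β : AffineVersion L n ℤ,
      ∃ m, leM m α ∧ leM m β ∧ ∀ w, leM w α → leM w β → leM w m) ∧
    (∀ α β : AffineVersion L n ℤ,
      ∃ j, leM α j ∧ leM β j ∧ ∀ w, leM α w → leM β w → leM j w) := by
  refine ⟨fun α => Relation.ReflTransGen.refl, ?_, fun α β γ h1 h2 => h1.trans h2, ?_, ?_⟩
  · -- antisymmetry
    intro α β h1 h2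
    obtain ⟨p, rfl⟩ := Quot.exists_rep α
    obtain ⟨q, rfl⟩ := Quot.exists_rep β
    show mkA p = mkA q
    rw [mkA_eq_iff rk hrk0 hrkn hrkmono]
    funext t
    exact le_antisymm (prof_anti_of_leM h2 t) (prof_anti_of_leM h1 t)
  · -- meets
    intro α β
    obtain ⟨p, rfl⟩ := Quot.exists_rep α
    obtain ⟨q, rfl⟩ := Quot.exists_rep β
    obtain ⟨A₁, B₁, _, hA₁, hB₁⟩ := exists_tails p
    obtain ⟨A₂, B₂, _, hA₂, hB₂⟩ := exists_tails q
    obtain ⟨r, hr⟩ := exists_point_of_profile rk hrk0 hrkn hrkmono hrkcov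
      (fun t => prof p t ⊔ prof q t) ((prof_mono p).sup (prof_mono q))
      (min A₁ A₂) (max B₁ B₂)
      (fun t ht => by
        show prof p t ⊔ prof q t = ⊥
        rw [hA₁ t (lt_of_lt_of_le ht (min_le_left _ _)),
          hA₂ t (lt_of_lt_of_le ht (min_le_right _ _))]
        simp)
      (fun t ht => by
        show prof p t ⊔ prof q t = ⊤
        rw [hB₁ t (lt_of_le_of_lt (le_max_left _ _) ht)]
        simp)
    refine ⟨mkA r, ?_, ?_, ?_⟩
    · apply leM_of_prof_le rk hrk0 hrkn hrkmono hrkcov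
      intro t
      rw [hr]
      exact le_sup_left
    · apply leM_of_prof_le rk hrk0 hrkn hrkmono hrkcov
      intro t
      rw [hr]
      exact le_sup_right
    · intro w hw1 hw2
      obtain ⟨s, rfl⟩ := Quot.exists_rep w
      have h1 : ∀ t, prof p t ≤ prof s t := fun t => prof_anti_of_leM hw1 t
      have h2 : ∀ t, prof q t ≤ prof s t := fun t => prof_anti_of_leM hw2 t
      show leM (mkA s) (mkA r)
      apply leM_of_prof_le rk hrk0 hrkn hrkmono hrkcov
      intro t
      rw [hr]
      exact sup_le (h1 t) (h2 t)
  · -- joins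
    intro α β
    obtain ⟨p, rfl⟩ := Quot.exists_rep α
    obtain ⟨q, rfl⟩ := Quot.exists_rep β
    obtain ⟨A₁, B₁, _, hA₁, hB₁⟩ := exists_tails p
    obtain ⟨A₂, B₂, _, hA₂, hB₂⟩ := exists_tails q
    obtain ⟨r, hr⟩ := exists_point_of_profile rk hrk0 hrkn hrkmono hrkcov
      (fun t => prof p t ⊓ prof q t) ((prof_mono p).inf (prof_mono q))
      (min A₁ A₂) (max B₁ B₂)
      (fun t ht => by
        show prof p t ⊓ prof q t = ⊥
        rw [hA₁ t (lt_of_lt_of_le ht (min_le_left _ _))]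
        simp)
      (fun t ht => by
        show prof p t ⊓ prof q t = ⊤
        rw [hB₁ t (lt_of_le_of_lt (le_max_left _ _) ht),
          hB₂ t (lt_of_le_of_lt (le_max_right _ _) ht)]
        simp)
    refine ⟨mkA r, ?_, ?_, ?_⟩
    · apply leM_of_prof_le rk hrk0 hrkn hrkmono hrkcov
      intro t
      rw [hr]
      exact inf_le_left
    · apply leM_of_prof_le rk hrk0 hrkn hrkmono hrkcov
      intro t
      rw [hr]
      exact inf_le_right
    · intro w hw1 hw2
      obtain ⟨s, rfl⟩ := Quot.exists_rep w
      have h1 : ∀ t, prof s t ≤ prof p t := fun t => prof_anti_of_leM hw1 t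
      have h2 : ∀ t, prof s t ≤ prof q t := fun t => prof_anti_of_leM hw2 t
      show leM (mkA r) (mkA s)
      apply leM_of_prof_le rk hrk0 hrkn hrkmono hrkcov
      intro t
      rw [hr]
      exact le_inf (h1 t) (h2 t)
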